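/- The graph G = C₄ ∪ C₄ (two vertex-disjoint 4-cycles on 8 vertices) is not uniquely embeddable: there exists an embedding σ₁ such that G ⊕ σ₁(G) is bipartite, and an embedding σ₂ such that G ⊕ σ₂(G) contains a triangle (indeed a K₄), so the two edge-sum graphs are not isomorphic. -/

import Mathlib

open SimpleGraph

/-- The cycle graph on `ZMod n`: `i` and `j` adjacent iff they differ by one. -/
def CycGraph (n : ℕ) : SimpleGraph (ZMod n) where
  Adj i j := i ≠ j ∧ (i = j + 1 ∨ j = i + 1)
  symm := by constructor; rintro i j ⟨hne, h⟩; exact ⟨hne.symm, h.symm⟩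
  loopless := by constructor; rintro i ⟨hne, _⟩; exact hne rfl

/-- `σ` is an embedding of `G` into its complement. -/
def IsGraphEmbedding {V : Type*} (G : SimpleGraph V) (σ : Equiv.Perm V) : Prop :=
  ∀ x y, G.Adj x y → ¬ G.Adj (σ x) (σ y)

/-- The edge sum `G ⊕ σ(G)`. -/
def EdgeSum {V : Type*} (G : SimpleGraph V) (σ : Equiv.Perm V) : SimpleGraph V :=
  G ⊔ G.map σ.toEmbedding

/-- Vertex-disjoint union of two graphs. -/
def DisjUnion {α β : Type*} (G : SimpleGraph α) (H : SimpleGraph β) :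
    SimpleGraph (α ⊕ β) where
  Adj x y :=
    (∃ a b, x = Sum.inl a ∧ y = Sum.inl b ∧ G.Adj a b) ∨
    (∃ a b, x = Sum.inr a ∧ y = Sum.inr b ∧ H.Adj a b)
  symm := by
    constructor; rintro x y (⟨a, b, rfl, rfl, h⟩ | ⟨a, b, rfl, rfl, h⟩)
    · exact Or.inl ⟨b, a, rfl, rfl, h.symm⟩
    · exact Or.inr ⟨b, a, rfl, rfl, h.symm⟩
  loopless := by
    constructor; rintro x (⟨a, b, rfl, h, hadj⟩ | ⟨a, b, rfl, h, hadj⟩) <;>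
      · cases h; exact hadj.ne rfl

def f1 : ZMod 4 ⊕ ZMod 4 → ZMod 4 ⊕ ZMod 4
  | .inl i => if i = 0 then .inl 0 else if i = 1 then .inr 0 else if i = 2 then .inl 2 else .inr 2
  | .inr i => if i = 0 then .inl 1 else if i = 1 then .inr 1 else if i = 2 then .inl 3 else .inr 3

def f2 : ZMod 4 ⊕ ZMod 4 → ZMod 4 ⊕ ZMod 4
  | .inl i => if i = 0 then .inl 0 else if i = 1 then .inl 2 else if i = 2 then .inr 0 else .inr 2
  | .inr i => if i = 0 then .inl 1 else if i = 1 then .inl 3 else if i = 2 then .inr 1 else .inr 3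

def g2 : ZMod 4 ⊕ ZMod 4 → ZMod 4 ⊕ ZMod 4
  | .inl i => if i = 0 then .inl 0 else if i = 1 then .inr 0 else if i = 2 then .inl 1 else .inr 1
  | .inr i => if i = 0 then .inl 2 else if i = 1 then .inr 2 else if i = 2 then .inl 3 else .inr 3

def sigma1 : Equiv.Perm (ZMod 4 ⊕ ZMod 4) := ⟨f1, f1, by decide, by decide⟩
def sigma2 : Equiv.Perm (ZMod 4 ⊕ ZMod 4) := ⟨f2, g2, by decide, by decide⟩

instance : DecidableRel (CycGraph 4).Adj :=
  fun i j => decidable_of_iff (i ≠ j ∧ (i = j + 1 ∨ j = i + 1)) Iff.rfl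

instance : DecidableRel (DisjUnion (CycGraph 4) (CycGraph 4)).Adj :=
  fun x y => decidable_of_iff
    ((∃ a b, x = Sum.inl a ∧ y = Sum.inl b ∧ (CycGraph 4).Adj a b) ∨
     (∃ a b, x = Sum.inr a ∧ y = Sum.inr b ∧ (CycGraph 4).Adj a b)) Iff.rfl

instance instES (σ : Equiv.Perm (ZMod 4 ⊕ ZMod 4)) :
    DecidableRel (EdgeSum (DisjUnion (CycGraph 4) (CycGraph 4)) σ).Adj :=
  fun x y => decidable_of_iff
    ((DisjUnion (CycGraph 4) (CycGraph 4)).Adj x y ∨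
     ∃ a b, (DisjUnion (CycGraph 4) (CycGraph 4)).Adj a b ∧ σ a = x ∧ σ b = y)
    (by rw [EdgeSum, SimpleGraph.sup_adj]; exact or_congr Iff.rfl (SimpleGraph.map_adj σ.toEmbedding _ x y).symm)

def col : ZMod 4 ⊕ ZMod 4 → Fin 2
  | .inl i => if i = 0 ∨ i = 2 then 0 else 1
  | .inr i => if i = 0 ∨ i = 2 then 1 else 0

/-- `C₄ ∪ C₄` is not uniquely embeddable: one embedding gives a bipartite edge-sum, another
gives an edge-sum containing a triangle (indeed a `K₄`), so the two edge-sums are not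
isomorphic. -/
theorem c4_c4_not_uniquely_embeddable :
    ∃ σ₁ σ₂ : Equiv.Perm (ZMod 4 ⊕ ZMod 4),
      IsGraphEmbedding (DisjUnion (CycGraph 4) (CycGraph 4)) σ₁ ∧
      IsGraphEmbedding (DisjUnion (CycGraph 4) (CycGraph 4)) σ₂ ∧
      (EdgeSum (DisjUnion (CycGraph 4) (CycGraph 4)) σ₁).Colorable 2 ∧
      (∃ t : Finset (ZMod 4 ⊕ ZMod 4),
        (EdgeSum (DisjUnion (CycGraph 4) (CycGraph 4)) σ₂).IsNClique 3 t) ∧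
      (∃ s : Finset (ZMod 4 ⊕ ZMod 4),
        (EdgeSum (DisjUnion (CycGraph 4) (CycGraph 4)) σ₂).IsNClique 4 s) ∧
      ¬ Nonempty (EdgeSum (DisjUnion (CycGraph 4) (CycGraph 4)) σ₁ ≃g
        EdgeSum (DisjUnion (CycGraph 4) (CycGraph 4)) σ₂) := by
  refine ⟨sigma1, sigma2, by unfold IsGraphEmbedding; decide, by unfold IsGraphEmbedding; decide, ?_, ?_, ?_, ?_⟩
  · have h : ∀ v w, (EdgeSum (DisjUnion (CycGraph 4) (CycGraph 4)) sigma1).Adj v w → col v ≠ col w := by decide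
    exact ⟨SimpleGraph.Coloring.mk col (fun {v w} => h v w)⟩
  · exact ⟨{Sum.inl 0, Sum.inl 1, Sum.inl 2}, by decide⟩
  · exact ⟨{Sum.inl 0, Sum.inl 1, Sum.inl 2, Sum.inl 3}, by decide⟩
  · rintro ⟨e⟩
    have hc : (EdgeSum (DisjUnion (CycGraph 4) (CycGraph 4)) sigma2).Colorable 2 := by
      have h : ∀ v w, (EdgeSum (DisjUnion (CycGraph 4) (CycGraph 4)) sigma1).Adj v w → col v ≠ col w := by decide
      exact ⟨(SimpleGraph.Coloring.mk col (fun {v w} => h v w)).comp e.symm.toHom⟩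
    have hcf : (EdgeSum (DisjUnion (CycGraph 4) (CycGraph 4)) sigma2).CliqueFree 3 := hc.cliqueFree (by norm_num)
    exact hcf {Sum.inl 0, Sum.inl 1, Sum.inl 2} (by decide)
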